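/- Fix n > 1 and let (x₁, …, x_n) ∈ ker(Φ_n). Write each component as x_k = Σ_{1 ≤ i < j ≤ n} α^{(k)}[j,i]·v[j,i]. Then: (i) α^{(k)}[j,i] = 0 whenever k = i or k = j (equivalently, Π_k(x_k) = 0 for every k); and (ii) for all 1 ≤ a < b < c ≤ n one has α^{(c)}[b,a] = α^{(a)}[c,b] = −α^{(b)}[c,a]. -/

import Mathlib

open Submodule

/-- Index type for the distinguished basis of `V(n)`: pairs `(j,i)` with `i < j`. -/
abbrev VIdx (n : ℕ) := {q : Fin n × Fin n // q.2 < q.1}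

/-- Index type for the distinguished basis of `W(n)`: triples `(j,i,k)` with `i < j`, `i ≤ k`. -/
abbrev WIdx (n : ℕ) := {t : Fin n × Fin n × Fin n // t.2.1 < t.1 ∧ t.2.1 ≤ t.2.2}

/-- The vector space `V(n)` over `F`. -/
abbrev V (F : Type*) [Field F] (n : ℕ) := VIdx n → F

/-- The vector space `W(n)` over `F`. -/
abbrev W (F : Type*) [Field F] (n : ℕ) := WIdx n → F

variable (F : Type*) [Field F] (n : ℕ)

/-- The vector `v[j,i]`, with the conventions `v[i,j] = -v[j,i]` and `v[i,i] = 0`. -/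
noncomputable def v (j i : Fin n) : V F n :=
  if h : i < j then Pi.single (⟨(j, i), h⟩ : VIdx n) 1
  else if h' : j < i then -Pi.single (⟨(i, j), h'⟩ : VIdx n) 1
  else 0

/-- The vector `w[j,i,k]` (the basis vector when `i < j` and `i ≤ k`, zero otherwise). -/
noncomputable def w (j i k : Fin n) : W F n :=
  if h : i < j ∧ i ≤ k then Pi.single (⟨(j, i, k), h⟩ : WIdx n) 1 else 0

/-- The linear map `φ_k : V(n) → W(n)` determined on basis vectors by
`φ_k(v[j,i]) = w[j,i,k]` if `i ≤ k`, and `φ_k(v[j,i]) = w[j,k,i] - w[i,k,j]` if `k < i`. -/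
noncomputable def phi (k : Fin n) : V F n →ₗ[F] W F n :=
  (Pi.basisFun F (VIdx n)).constr F fun q =>
    if q.1.2 ≤ k then w F n q.1.1 q.1.2 k
    else w F n q.1.1 k q.1.2 - w F n q.1.2 k q.1.1

/-- The linear map `Φ_n : V(n)ⁿ → W(n)`, `Φ_n(x₁,…,x_n) = φ₁(x₁) + ⋯ + φ_n(x_n)`. -/
noncomputable def Phi : (Fin n → V F n) →ₗ[F] W F n :=
  ∑ k : Fin n, (phi F n k).comp (LinearMap.proj k)

/-- For `X ≤ V(n)`, the subspace `X* ≤ W(n)`: the span of `φ₁(X) ∪ ⋯ ∪ φ_n(X)`. -/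
noncomputable def starV (X : Submodule F (V F n)) : Submodule F (W F n) :=
  ⨆ k : Fin n, X.map (phi F n k)

/-- For `Y ≤ W(n)`, the subspace `Y* ≤ V(n)`: the intersection `⋂ₖ φ_k⁻¹(Y)`. -/
noncomputable def starW (Y : Submodule F (W F n)) : Submodule F (V F n) :=
  ⨅ k : Fin n, Y.comap (phi F n k)


lemma w_apply (j i k : Fin n) (t : WIdx n) :
    w F n j i k t = if t.1 = (j, i, k) then 1 else 0 := by
  obtain ⟨⟨J, I, K⟩, hIJ, hIK⟩ := t
  simp only at hIJ hIK
  rw [w]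
  split_ifs with h h2 h2
  · rw [Pi.single_apply, if_pos (Subtype.ext h2)]
  · rw [Pi.single_apply, if_neg fun h3 => h2 (congrArg Subtype.val h3)]
  · have h3 : ((J : Fin n), I, K) = (j, i, k) := h2
    simp only [Prod.mk.injEq] at h3
    obtain ⟨rfl, rfl, rfl⟩ := h3
    exact absurd ⟨hIJ, hIK⟩ h
  · rfl

set_option maxHeartbeats 1000000 in
lemma key (k J I K : Fin n) (hIJ : I < J) (hIK : I ≤ K) (y : V F n) (q : VIdx n) :
      y q * ((if q.1.2 ≤ k then w F n q.1.1 q.1.2 k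
        else w F n q.1.1 k q.1.2 - w F n q.1.2 k q.1.1) ⟨(J,I,K), hIJ, hIK⟩) =
      (if q = (⟨(J,I), hIJ⟩ : VIdx n) then (if k = K then y q else 0) else 0)
      + ((if h : K < J then
          (if q = (⟨(J,K), h⟩ : VIdx n) then (if k = I ∧ I < K then y q else 0) else 0) else 0)
      - (if h : J < K then
          (if q = (⟨(K,J), h⟩ : VIdx n) then (if k = I then y q else 0) else 0) else 0)) := by
  obtain ⟨⟨b, a⟩, hab⟩ := q
  simp only at hab
  simp only [ite_apply, Pi.sub_apply, w_apply, Subtype.mk.injEq, Prod.mk.injEq]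
  split_ifs <;> first | (exfalso; omega) | ring

lemma phi_apply (k : Fin n) (y : V F n) (J I K : Fin n) (hIJ : I < J) (hIK : I ≤ K) :
    phi F n k y ⟨(J, I, K), hIJ, hIK⟩ =
      (if k = K then y ⟨(J, I), hIJ⟩ else 0)
      + ((if h : K < J then (if k = I ∧ I < K then y ⟨(J, K), h⟩ else 0) else 0)
      - (if h : J < K then (if k = I then y ⟨(K, J), h⟩ else 0) else 0)) := by
  rw [phi, Module.Basis.constr_apply_fintype]
  simp only [Finset.sum_apply, Pi.smul_apply, smul_eq_mul, Module.Basis.equivFun_apply,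
    Pi.basisFun_repr]
  rw [Finset.sum_congr rfl (fun q _ => key F n k J I K hIJ hIK y q),
    Finset.sum_add_distrib, Finset.sum_sub_distrib]
  by_cases hKJ : K < J <;> by_cases hJK : J < K <;>
    simp [hKJ, hJK, Finset.sum_ite_eq']

lemma Phi_apply (x : Fin n → V F n) (J I K : Fin n) (hIJ : I < J) (hIK : I ≤ K) :
    Phi F n x ⟨(J, I, K), hIJ, hIK⟩ =
      x K ⟨(J, I), hIJ⟩
      + ((if h : K < J ∧ I < K then x I ⟨(J, K), h.1⟩ else 0)
      - (if h : J < K then x I ⟨(K, J), h⟩ else 0)) := by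
  rw [Phi]
  simp only [LinearMap.coe_sum, Finset.sum_apply, LinearMap.comp_apply,
    LinearMap.proj_apply]
  rw [Finset.sum_congr rfl (fun k _ => phi_apply F n k (x k) J I K hIJ hIK),
    Finset.sum_add_distrib, Finset.sum_sub_distrib]
  by_cases hKJ : K < J <;> by_cases hJK : J < K <;> by_cases hIK' : I < K <;>
    simp [hKJ, hJK, hIK', Finset.sum_ite_eq']

/-- Let `(x₁,…,x_n) ∈ ker(Φ_n)`, with coordinates `α^{(k)}[j,i] = x k ⟨(j,i)⟩`.  Then:
(i) `α^{(k)}[j,i] = 0` whenever `k = i` or `k = j`; and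
(ii) for `a < b < c`, `α^{(c)}[b,a] = α^{(a)}[c,b] = −α^{(b)}[c,a]`. -/
theorem statement6 (p : ℕ) [Fact p.Prime] (hp2 : p ≠ 2) (n : ℕ) (hn : 1 < n)
    (x : Fin n → V (ZMod p) n) (hx : Phi (ZMod p) n x = 0) :
    (∀ k : Fin n, ∀ q : VIdx n, q.1.1 = k ∨ q.1.2 = k → x k q = 0) ∧
    (∀ a b c : Fin n, ∀ hab : a < b, ∀ hbc : b < c,
      x c ⟨(b, a), hab⟩ = x a ⟨(c, b), hbc⟩ ∧
      x a ⟨(c, b), hbc⟩ = -x b ⟨(c, a), hab.trans hbc⟩) := by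
  have key0 : ∀ (J I K : Fin n) (hIJ : I < J) (hIK : I ≤ K),
      x K ⟨(J, I), hIJ⟩
      + ((if h : K < J ∧ I < K then x I ⟨(J, K), h.1⟩ else 0)
      - (if h : J < K then x I ⟨(K, J), h⟩ else 0)) = 0 := by
    intro J I K hIJ hIK
    rw [← Phi_apply (ZMod p) n x J I K hIJ hIK, hx]
    rfl
  constructor
  · rintro k ⟨⟨b, a⟩, hab⟩ hk
    simp only at hab hk
    rcases hk with rfl | rfl
    · have h := key0 b a b hab hab.le
      rw [dif_neg (by omega), dif_neg (by omega)] at h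
      simpa using h
    · have h := key0 b a a hab le_rfl
      rw [dif_neg (by omega), dif_neg (by omega)] at h
      simpa using h
  · intro a b c hab hbc
    have h1 := key0 b a c hab (hab.trans hbc).le
    have h2 := key0 c a b (hab.trans hbc) hab.le
    rw [dif_neg (by omega), dif_pos hbc] at h1
    rw [dif_pos ⟨hbc, hab⟩, dif_neg (by omega)] at h2
    constructor
    · linear_combination h1
    · linear_combination h2
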